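/- Let x be a random vector in ℝ^{d0} with second moment matrix C = E[x xᵀ], and suppose the distribution of x is β-retentive for some β ∈ (0,1/2]. Fix α > 0 and let F_α be the class of two-layer ReLU networks f_{u,V}(x) = Σ_{i=1}^{d1} u_i σ(v_iᵀ x) with Σ_{i=1}^{d1} |u_i|·√(E[σ(v_iᵀx)²]) ≤ α. Then for any sample x_1,…,x_n ∈ ℝ^{d0} lying in the column space of C, the empirical Rademacher complexity satisfies R_S(F_α) ≤ 2α·‖X‖_{C†}/(n·√β), where ‖X‖_{C†} = √(Σ_{i=1}^n x_iᵀ C† x_i) and C† is the Moore–Penrose pseudoinverse of C. -/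

import Mathlib

open MeasureTheory Matrix

/-- Empirical Rademacher complexity of a class `F` of real-valued functions
with respect to the sample `x₁, …, xₙ`:
`E_σ sup_{f ∈ F} (1/n) Σ_i σ_i f(x_i)` with iid uniform signs `σ_i ∈ {±1}`. -/
noncomputable def radS {X : Type*} {n : ℕ} (F : Set (X → ℝ)) (x : Fin n → X) : ℝ :=
  ((2 : ℝ) ^ n)⁻¹ * ∑ s : Fin n → Bool,
    sSup ((fun f : X → ℝ =>
      (n : ℝ)⁻¹ * ∑ i, (if s i then (1 : ℝ) else -1) * f (x i)) '' F)

/-- Moore–Penrose pseudoinverse, via its characterizing identities. -/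
noncomputable def pinv {m k : ℕ} (M : Matrix (Fin m) (Fin k) ℝ) :
    Matrix (Fin k) (Fin m) ℝ :=
  by classical exact
    if h : ∃ N : Matrix (Fin k) (Fin m) ℝ,
        M * N * M = M ∧ N * M * N = N ∧ (M * N)ᵀ = M * N ∧ (N * M)ᵀ = N * M
    then h.choose else 0

/-- Second moment matrix `C = E[x xᵀ]` of a distribution `μ` on `ℝ^{d0}`. -/
noncomputable def secondMoment {d0 : ℕ} (μ : Measure (Fin d0 → ℝ)) :
    Matrix (Fin d0) (Fin d0) ℝ :=
  Matrix.of fun a b => ∫ x, x a * x b ∂μ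

/-- The class `F_α` of two-layer ReLU networks
`x ↦ Σ_i u_i σ(v_iᵀ x)` with `Σ_i |u_i| √(E_μ[σ(v_iᵀ x)²]) ≤ α`. -/
noncomputable def Falpha {d0 : ℕ} (d1 : ℕ) (μ : Measure (Fin d0 → ℝ)) (α : ℝ) :
    Set ((Fin d0 → ℝ) → ℝ) :=
  {f | ∃ (u : Fin d1 → ℝ) (V : Fin d1 → Fin d0 → ℝ),
    f = (fun x => ∑ i, u i * max (V i ⬝ᵥ x) 0) ∧
    ∑ i, |u i| * Real.sqrt (∫ x, max (V i ⬝ᵥ x) 0 ^ 2 ∂μ) ≤ α}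


section Aux
theorem pinv_exists {m : ℕ} (A : Matrix (Fin m) (Fin m) ℝ) (hA : A.IsHermitian) :
    ∃ N : Matrix (Fin m) (Fin m) ℝ,
      A * N * A = A ∧ N * A * N = N ∧ (A * N)ᵀ = A * N ∧ (N * A)ᵀ = N * A := by
  classical
  set U : Matrix (Fin m) (Fin m) ℝ := (hA.eigenvectorUnitary : Matrix (Fin m) (Fin m) ℝ) with hU
  set d : Fin m → ℝ := hA.eigenvalues with hd
  have hspec : A = U * diagonal d * star U := by simpa using hA.spectral_theorem
  have hUU : star U * U = 1 := mem_unitaryGroup_iff'.mp (hA.eigenvectorUnitary).2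
  have key : ∀ e f : Fin m → ℝ, (U * diagonal e * star U) * (U * diagonal f * star U)
      = U * diagonal (fun i => e i * f i) * star U := by
    intro e f
    have h1 : star U * (U * (diagonal f * star U)) = diagonal f * star U := by
      rw [← Matrix.mul_assoc, ← Matrix.mul_assoc, hUU, Matrix.one_mul]
    simp only [Matrix.mul_assoc, h1]
    rw [← Matrix.mul_assoc (diagonal e), diagonal_mul_diagonal]
  have keyT : ∀ e : Fin m → ℝ, (U * diagonal e * star U)ᵀ = U * diagonal e * star U := by
    intro e
    have hs : star U = Uᵀ := by
      rw [Matrix.star_eq_conjTranspose, conjTranspose_eq_transpose_of_trivial]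
    rw [hs, Matrix.transpose_mul, Matrix.transpose_mul, transpose_transpose,
      diagonal_transpose, Matrix.mul_assoc]
  set d' : Fin m → ℝ := fun i => if d i = 0 then 0 else (d i)⁻¹ with hd'
  refine ⟨U * diagonal d' * star U, ?_, ?_, ?_, ?_⟩
  · rw [hspec, key, key]
    have he : (fun i => d i * d' i * d i) = d := by
      funext i
      by_cases h : d i = 0
      · simp [hd', h]
      · simp only [hd', if_neg h]; field_simp
    rw [he]
  · rw [hspec, key, key]
    have he : (fun i => d' i * d i * d' i) = d' := by
      funext i
      by_cases h : d i = 0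
      · simp [hd', h]
      · simp only [hd', if_neg h]; field_simp
    rw [he]
  · rw [hspec, key, keyT]
  · rw [hspec, key, keyT]

variable {d0 : ℕ} {μ : Measure (Fin d0 → ℝ)}

lemma dot_expand (v w : Fin d0 → ℝ) : (fun x : Fin d0 → ℝ => (v ⬝ᵥ x) * (w ⬝ᵥ x))
    = fun x => ∑ a, ∑ b, (v a * w b) * (x a * x b) := by
  funext x
  rw [dotProduct, dotProduct, Finset.sum_mul_sum]
  exact Finset.sum_congr rfl fun a _ => Finset.sum_congr rfl fun b _ => by ring

lemma integrable_dot (hint : ∀ a b : Fin d0, Integrable (fun x => x a * x b) μ) (v w : Fin d0 → ℝ) :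
    Integrable (fun x => (v ⬝ᵥ x) * (w ⬝ᵥ x)) μ := by
  rw [dot_expand]
  exact integrable_finset_sum _ fun a _ => integrable_finset_sum _ fun b _ =>
    ((hint a b).const_mul _)

lemma bilin_eq (hint : ∀ a b : Fin d0, Integrable (fun x => x a * x b) μ) (v w : Fin d0 → ℝ) :
    ∫ x, (v ⬝ᵥ x) * (w ⬝ᵥ x) ∂μ = v ⬝ᵥ (secondMoment μ).mulVec w := by
  rw [dot_expand]
  rw [integral_finset_sum _ (fun a _ => integrable_finset_sum _ fun b _ => ((hint a b).const_mul _))]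
  have : ∀ a : Fin d0, ∫ x, ∑ b, (v a * w b) * (x a * x b) ∂μ
      = ∑ b, (v a * w b) * ∫ x, x a * x b ∂μ := by
    intro a
    rw [integral_finset_sum _ (fun b _ => ((hint a b).const_mul _))]
    exact Finset.sum_congr rfl fun b _ => integral_const_mul _ _
  simp only [this, dotProduct, mulVec, secondMoment]
  exact Finset.sum_congr rfl fun a _ => by
    rw [Finset.mul_sum]
    exact Finset.sum_congr rfl fun b _ => by simp [Matrix.of_apply]; ring

lemma secondMoment_symm : (secondMoment μ)ᵀ = secondMoment μ := by
  funext a b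
  simp only [secondMoment, transpose_apply, Matrix.of_apply]
  exact integral_congr_ae (Filter.Eventually.of_forall fun x => mul_comm _ _)

lemma quad_nonneg (hint : ∀ a b : Fin d0, Integrable (fun x => x a * x b) μ) (v : Fin d0 → ℝ) : 0 ≤ v ⬝ᵥ (secondMoment μ).mulVec v := by
  rw [← bilin_eq hint]
  exact integral_nonneg fun x => mul_self_nonneg _

lemma bilin_symm (hint : ∀ a b : Fin d0, Integrable (fun x => x a * x b) μ) (v w : Fin d0 → ℝ) :
    v ⬝ᵥ (secondMoment μ).mulVec w = w ⬝ᵥ (secondMoment μ).mulVec v := by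
  rw [← bilin_eq hint, ← bilin_eq hint]
  exact integral_congr_ae (Filter.Eventually.of_forall fun x => mul_comm _ _)

lemma cs_ineq (hint : ∀ a b : Fin d0, Integrable (fun x => x a * x b) μ) (v w : Fin d0 → ℝ) :
    (v ⬝ᵥ (secondMoment μ).mulVec w)^2
      ≤ (v ⬝ᵥ (secondMoment μ).mulVec v) * (w ⬝ᵥ (secondMoment μ).mulVec w) := by
  set C := secondMoment μ with hC
  set Qv := v ⬝ᵥ C.mulVec v
  set Qw := w ⬝ᵥ C.mulVec w
  set B := v ⬝ᵥ C.mulVec w with hB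
  have hpoly : ∀ t : ℝ, 0 ≤ Qw * (t*t) + (2*B) * t + Qv := by
    intro t
    have h0 : 0 ≤ (v + t • w) ⬝ᵥ C.mulVec (v + t • w) := quad_nonneg hint _
    have hexp : (v + t • w) ⬝ᵥ C.mulVec (v + t • w) = Qw * (t*t) + (2*B) * t + Qv := by
      have hsym : w ⬝ᵥ C.mulVec v = B := (bilin_symm hint w v).trans rfl |>.symm ▸ by
        rw [hB, bilin_symm hint v w]
      simp only [mulVec_add, mulVec_smul, dotProduct_add, dotProduct_smul, add_dotProduct,
        smul_dotProduct, smul_eq_mul]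
      rw [hsym]
      ring
    rw [hexp] at h0
    exact h0
  have hd := discrim_le_zero hpoly
  rw [discrim] at hd
  nlinarith

end Aux

set_option linter.unusedSectionVars false

lemma relu_lip (a b : ℝ) : |max a 0 - max b 0| ≤ |a - b| := abs_max_sub_max_le_abs a b 0

lemma step_lemma {ι : Type*} [Nonempty ι] (G t : ι → ℝ)
    (h1 : BddAbove (Set.range fun i => G i + t i))
    (h2 : BddAbove (Set.range fun i => G i - t i))
    (h3 : BddAbove (Set.range fun i => G i + max (t i) 0))
    (h4 : BddAbove (Set.range fun i => G i - max (t i) 0)) :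
    (⨆ i, (G i + max (t i) 0)) + (⨆ i, (G i - max (t i) 0))
      ≤ (⨆ i, (G i + t i)) + (⨆ i, (G i - t i)) := by
  rw [ciSup_add h3]
  refine ciSup_le fun i => ?_
  rw [add_ciSup h4]
  refine ciSup_le fun j => ?_
  have key : (G i + max (t i) 0) + (G j - max (t j) 0) ≤ G i + G j + |t i - t j| := by
    have := relu_lip (t i) (t j)
    have h := le_abs_self (max (t i) 0 - max (t j) 0)
    linarith [h.trans this]
  rcases le_total (t j) (t i) with h | h
  · have : G i + G j + |t i - t j| = (G i + t i) + (G j - t j) := by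
      rw [abs_of_nonneg (by linarith)]; ring
    rw [this] at key
    exact key.trans (add_le_add (le_ciSup h1 i) (le_ciSup h2 j))
  · have : G i + G j + |t i - t j| = (G j + t j) + (G i - t i) := by
      rw [abs_of_nonpos (by linarith)]; ring
    rw [this] at key
    exact key.trans (add_le_add (le_ciSup h1 j) (le_ciSup h2 i))

/-- bflip one bit -/
def bflip {n : ℕ} (K : Fin n) (s : Fin n → Bool) : Fin n → Bool :=
  Function.update s K (!s K)

lemma flip_involutive {n : ℕ} (K : Fin n) : Function.Involutive (bflip K) := by
  intro s
  funext j
  by_cases h : j = K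
  · subst h; simp [bflip]
  · simp [bflip, Function.update_of_ne h]

lemma flip_apply_ne {n : ℕ} (K : Fin n) (s : Fin n → Bool) {j : Fin n} (h : j ≠ K) :
    bflip K s j = s j := Function.update_of_ne h _ _

lemma flip_apply_self {n : ℕ} (K : Fin n) (s : Fin n → Bool) : bflip K s K = !s K := by
  simp [bflip]

lemma sum_flip {n : ℕ} (K : Fin n) (f : (Fin n → Bool) → ℝ) :
    ∑ s : Fin n → Bool, f (bflip K s) = ∑ s : Fin n → Bool, f s :=
  Fintype.sum_equiv ((flip_involutive K).toPerm _).symm _ _ (fun s => by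
    simp [Function.Involutive.toPerm, flip_involutive K s])

section Contraction
variable {n : ℕ} {V : Type*} [Nonempty V] (t : Fin n → V → ℝ) (c : Fin n → ℝ)

/-- sign of a boolean -/
def sgn (b : Bool) : ℝ := if b then 1 else -1

lemma sgn_abs (b : Bool) : |sgn b| = 1 := by cases b <;> simp [sgn]

/-- mixed process: coordinates `< k` are linear, the rest pass through ReLU -/
def mixed (k : ℕ) (s : Fin n → Bool) (v : V) : ℝ :=
  ∑ j, sgn (s j) * (if (j : ℕ) < k then t j v else max (t j v) 0)

lemma bdd_range (hb : ∀ j v, |t j v| ≤ c j)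
    (w : Fin n → V → ℝ) (hw : ∀ j v, |w j v| ≤ |t j v|) (s : Fin n → Bool) :
    BddAbove (Set.range fun v => ∑ j, sgn (s j) * w j v) := by
  refine ⟨∑ j, c j, ?_⟩
  rintro r ⟨v, rfl⟩
  calc ∑ j, sgn (s j) * w j v ≤ ∑ j, |sgn (s j) * w j v| :=
        Finset.sum_le_sum fun j _ => le_abs_self _
    _ ≤ ∑ j, c j := Finset.sum_le_sum fun j _ => by
        rw [abs_mul, sgn_abs, one_mul]
        exact (hw j v).trans (hb j v)

lemma contraction_step (hb : ∀ j v, |t j v| ≤ c j) (k : ℕ) (hk : k < n) :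
    ∑ s : Fin n → Bool, (⨆ v, mixed t k s v)
      ≤ ∑ s : Fin n → Bool, (⨆ v, mixed t (k + 1) s v) := by
  set K : Fin n := ⟨k, hk⟩ with hK
  have pair : ∀ s : Fin n → Bool,
      (⨆ v, mixed t k s v) + (⨆ v, mixed t k (bflip K s) v)
        ≤ (⨆ v, mixed t (k+1) s v) + (⨆ v, mixed t (k+1) (bflip K s) v) := by
    intro s
    set G : V → ℝ := fun v =>
      ∑ j ∈ Finset.univ.erase K, sgn (s j) * (if (j : ℕ) < k then t j v else max (t j v) 0)
      with hG
    have hsplit : ∀ (m : ℕ) (s' : Fin n → Bool) (v : V),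
        mixed t m s' v = (∑ j ∈ Finset.univ.erase K,
            sgn (s' j) * (if (j : ℕ) < m then t j v else max (t j v) 0))
          + sgn (s' K) * (if (K : ℕ) < m then t K v else max (t K v) 0) := by
      intro m s' v
      rw [mixed]
      exact (Finset.sum_erase_add _ _ (Finset.mem_univ K)).symm
    have herase : ∀ (s' : Fin n → Bool) (v : V),
        ∑ j ∈ Finset.univ.erase K,
            sgn (s' j) * (if (j : ℕ) < k + 1 then t j v else max (t j v) 0)
        = ∑ j ∈ Finset.univ.erase K,
            sgn (s' j) * (if (j : ℕ) < k then t j v else max (t j v) 0) := by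
      intro s' v
      refine Finset.sum_congr rfl fun j hj => ?_
      have hjk : (j : ℕ) ≠ k := fun h => (Finset.mem_erase.mp hj).1 (Fin.ext h)
      congr 1
      exact if_congr (by omega) rfl rfl
    have hflipG : ∀ (m : ℕ) (v : V),
        ∑ j ∈ Finset.univ.erase K,
            sgn (bflip K s j) * (if (j : ℕ) < m then t j v else max (t j v) 0)
        = ∑ j ∈ Finset.univ.erase K,
            sgn (s j) * (if (j : ℕ) < m then t j v else max (t j v) 0) := by
      intro m v
      exact Finset.sum_congr rfl fun j hj => by
        rw [flip_apply_ne K s (Finset.mem_erase.mp hj).1]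
    have hKk : ¬ ((K : ℕ) < k) := by simp [hK]
    have hKk1 : (K : ℕ) < k + 1 := by simp [hK]
    have hsgnflip : sgn (bflip K s K) = - sgn (s K) := by
      rw [flip_apply_self]; cases s K <;> simp [sgn]
    have e1 : ∀ v, mixed t k s v = G v + sgn (s K) * max (t K v) 0 := by
      intro v; rw [hsplit, if_neg hKk]
    have e2 : ∀ v, mixed t k (bflip K s) v = G v - sgn (s K) * max (t K v) 0 := by
      intro v; rw [hsplit, if_neg hKk, hflipG, hsgnflip]; ring
    have e3 : ∀ v, mixed t (k+1) s v = G v + sgn (s K) * t K v := by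
      intro v; rw [hsplit, if_pos hKk1, herase]
    have e4 : ∀ v, mixed t (k+1) (bflip K s) v = G v - sgn (s K) * t K v := by
      intro v; rw [hsplit, if_pos hKk1, hflipG, herase, hsgnflip]; ring
    have bddG : ∀ u : V → ℝ, (∀ v, u v ≤ c K) →
        BddAbove (Set.range fun v => G v + u v) := by
      intro u hu
      refine ⟨(∑ j ∈ Finset.univ.erase K, c j) + c K, ?_⟩
      rintro r ⟨v, rfl⟩
      refine add_le_add ?_ (hu v)
      calc G v ≤ ∑ j ∈ Finset.univ.erase K,
            |sgn (s j) * (if (j : ℕ) < k then t j v else max (t j v) 0)| :=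
            Finset.sum_le_sum fun j _ => le_abs_self _
        _ ≤ ∑ j ∈ Finset.univ.erase K, c j := Finset.sum_le_sum fun j _ => by
            rw [abs_mul, sgn_abs, one_mul]
            refine le_trans ?_ (hb j v)
            by_cases h : (j : ℕ) < k
            · simp [h]
            · simp only [if_neg h]
              rw [abs_of_nonneg (le_max_right _ _)]
              exact max_le (le_abs_self _) (abs_nonneg _)
    have habs : ∀ v, |t K v| ≤ c K := fun v => hb K v
    have hrelu : ∀ v, |max (t K v) 0| ≤ c K := fun v => by
      rw [abs_of_nonneg (le_max_right _ _)]
      exact (max_le (le_abs_self _) (abs_nonneg _)).trans (habs v)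
    have b1 : BddAbove (Set.range fun v => G v + t K v) :=
      bddG _ fun v => (le_abs_self _).trans (habs v)
    have b2 : BddAbove (Set.range fun v => G v - t K v) := by
      simpa [sub_eq_add_neg] using bddG (fun v => -(t K v))
        (fun v => (neg_le_abs _).trans (habs v))
    have b3 : BddAbove (Set.range fun v => G v + max (t K v) 0) :=
      bddG _ fun v => (le_abs_self _).trans (hrelu v)
    have b4 : BddAbove (Set.range fun v => G v - max (t K v) 0) := by
      simpa [sub_eq_add_neg] using bddG (fun v => -(max (t K v) 0))
        (fun v => (neg_le_abs _).trans (hrelu v))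
    simp only [e1, e2, e3, e4]
    cases hsK : s K
    · have hsgn : sgn false = -1 := rfl
      simp only [hsgn, neg_one_mul, ← sub_eq_add_neg, sub_neg_eq_add]
      rw [add_comm (⨆ v, G v - max (t K v) 0), add_comm (⨆ v, G v - t K v)]
      exact step_lemma G (fun v => t K v) b1 b2 b3 b4
    · have hsgn : sgn true = 1 := rfl
      simp only [hsgn, one_mul]
      exact step_lemma G (fun v => t K v) b1 b2 b3 b4
  have hs1 : ∑ s : Fin n → Bool, (⨆ v, mixed t k (bflip K s) v)
      = ∑ s : Fin n → Bool, (⨆ v, mixed t k s v) := sum_flip K (fun s' => ⨆ v, mixed t k s' v)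
  have hs2 : ∑ s : Fin n → Bool, (⨆ v, mixed t (k+1) (bflip K s) v)
      = ∑ s : Fin n → Bool, (⨆ v, mixed t (k+1) s v) := sum_flip K (fun s' => ⨆ v, mixed t (k+1) s' v)
  have := Finset.sum_le_sum (fun s (_ : s ∈ Finset.univ) => pair s)
  rw [Finset.sum_add_distrib, Finset.sum_add_distrib] at this
  simp only [hs1, hs2] at this
  linarith

lemma contraction (hb : ∀ j v, |t j v| ≤ c j) :
    ∑ s : Fin n → Bool, (⨆ v, ∑ j, sgn (s j) * max (t j v) 0)
      ≤ ∑ s : Fin n → Bool, (⨆ v, ∑ j, sgn (s j) * t j v) := by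
  have key : ∀ k : ℕ, k ≤ n → ∑ s : Fin n → Bool, (⨆ v, mixed t 0 s v)
      ≤ ∑ s : Fin n → Bool, (⨆ v, mixed t k s v) := by
    intro k
    induction k with
    | zero => exact fun _ => le_refl _
    | succ m ih => exact fun h =>
        (ih (Nat.le_of_succ_le h)).trans (contraction_step t c hb m (Nat.lt_of_succ_le h))
  have h0 : ∀ s (v : V), mixed t 0 s v = ∑ j, sgn (s j) * max (t j v) 0 := by
    intro s v
    rw [mixed]
    exact Finset.sum_congr rfl fun j _ => by simp
  have hn : ∀ s (v : V), mixed t n s v = ∑ j, sgn (s j) * t j v := by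
    intro s v
    rw [mixed]
    exact Finset.sum_congr rfl fun j _ => by simp [j.isLt]
  have := key n le_rfl
  simp only [h0, hn] at this
  exact this

end Contraction


section Helpers

lemma neg_involutive' {n : ℕ} : Function.Involutive (fun (s : Fin n → Bool) => fun i => ! s i) := by
  intro s; funext i; simp

lemma sum_neg {n : ℕ} (f : (Fin n → Bool) → ℝ) :
    ∑ s : Fin n → Bool, f (fun i => ! s i) = ∑ s : Fin n → Bool, f s :=
  Fintype.sum_equiv ((neg_involutive' (n := n)).toPerm _).symm _ _ (fun s => by
    simp [Function.Involutive.toPerm, neg_involutive' s])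

lemma sgn_neg' (b : Bool) : sgn (! b) = - sgn b := by cases b <;> simp [sgn]

lemma sgn_mul_self (b : Bool) : sgn b * sgn b = 1 := by cases b <;> norm_num [sgn]

lemma card_signs (n : ℕ) : (Fintype.card (Fin n → Bool) : ℝ) = 2 ^ n := by
  simp [Fintype.card_fun]

lemma sgn_orth {n : ℕ} (j k : Fin n) (hjk : j ≠ k) :
    ∑ s : Fin n → Bool, sgn (s j) * sgn (s k) = 0 := by
  have h := sum_flip j (fun s => sgn (s j) * sgn (s k))
  have h2 : ∀ s : Fin n → Bool, sgn (bflip j s j) * sgn (bflip j s k)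
      = - (sgn (s j) * sgn (s k)) := by
    intro s
    rw [flip_apply_self, flip_apply_ne j s (Ne.symm hjk), sgn_neg']
    ring
  simp only [h2, Finset.sum_neg_distrib] at h
  linarith

lemma dot_sum_smul {d0 n : ℕ} (v : Fin d0 → ℝ) (c : Fin n → ℝ) (w : Fin n → Fin d0 → ℝ) :
    v ⬝ᵥ (∑ j, c j • w j) = ∑ j, c j * (v ⬝ᵥ w j) := by
  simp only [dotProduct, Finset.sum_apply, Pi.smul_apply, smul_eq_mul, Finset.mul_sum]
  rw [Finset.sum_comm]
  exact Finset.sum_congr rfl fun j _ => Finset.sum_congr rfl fun a _ => by ring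

lemma sum_smul_dot {d0 n : ℕ} (v : Fin d0 → ℝ) (c : Fin n → ℝ) (w : Fin n → Fin d0 → ℝ) :
    (∑ j, c j • w j) ⬝ᵥ v = ∑ j, c j * (w j ⬝ᵥ v) := by
  rw [dotProduct_comm, dot_sum_smul]
  exact Finset.sum_congr rfl fun j _ => by rw [dotProduct_comm]

lemma mulVec_sum_smul {d0 n : ℕ} (C : Matrix (Fin d0) (Fin d0) ℝ) (c : Fin n → ℝ)
    (w : Fin n → Fin d0 → ℝ) :
    C.mulVec (∑ j, c j • w j) = ∑ j, c j • C.mulVec (w j) := by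
  have h := map_sum C.mulVecLin (fun j => c j • w j) Finset.univ
  simp only [_root_.map_smul, Matrix.mulVecLin_apply] at h
  exact h

end Helpers

set_option maxHeartbeats 2000000 in
/-- **Empirical Rademacher complexity bound for dropout classes.**
If the input distribution is `β`-retentive with second moment matrix `C`, then
for any sample lying in the column space of `C`,
`R_S(F_α) ≤ 2 α ‖X‖_{C†} / (n √β)`. -/
theorem rademacher_bound_dropout_class
    {d0 d1 n : ℕ} (μ : Measure (Fin d0 → ℝ)) [IsProbabilityMeasure μ]
    (hint : ∀ a b : Fin d0, Integrable (fun x => x a * x b) μ)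
    (β : ℝ) (hβ : β ∈ Set.Ioc (0 : ℝ) (1 / 2))
    (hret : ∀ v : Fin d0 → ℝ, v ≠ 0 →
      β * ∫ x, (v ⬝ᵥ x) ^ 2 ∂μ ≤ ∫ x, max (v ⬝ᵥ x) 0 ^ 2 ∂μ)
    (α : ℝ) (hα : 0 < α)
    (x : Fin n → Fin d0 → ℝ)
    (hx : ∀ i, ∃ z : Fin d0 → ℝ, (secondMoment μ).mulVec z = x i) :
    radS (Falpha d1 μ α) x ≤
      2 * α * Real.sqrt (∑ i, x i ⬝ᵥ (pinv (secondMoment μ)).mulVec (x i))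
        / (n * Real.sqrt β) := by
  classical
  set C := secondMoment μ with hCdef
  have hCsymm : Cᵀ = C := secondMoment_symm
  have hCherm : C.IsHermitian := by
    show Cᴴ = C
    rw [conjTranspose_eq_transpose_of_trivial]
    exact hCsymm
  have hex := pinv_exists C hCherm
  have hpinv : C * pinv C * C = C := by
    unfold pinv
    rw [dif_pos hex]
    exact hex.choose_spec.1
  choose z hz using hx
  -- quadratic form facts
  have hQnonneg : ∀ v, 0 ≤ v ⬝ᵥ C.mulVec v := quad_nonneg hint
  have hQint : ∀ v : Fin d0 → ℝ, v ⬝ᵥ C.mulVec v = ∫ y, (v ⬝ᵥ y) ^ 2 ∂μ := by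
    intro v
    rw [← bilin_eq hint v v]
    exact integral_congr_ae (Filter.Eventually.of_forall fun y => (sq (v ⬝ᵥ y)).symm)
  set NN : (Fin d0 → ℝ) → ℝ := fun v => Real.sqrt (∫ y, max (v ⬝ᵥ y) 0 ^ 2 ∂μ) with hNN
  have hNnonneg : ∀ v, 0 ≤ NN v := fun v => Real.sqrt_nonneg _
  have hIrelu : ∀ v, 0 ≤ ∫ y, max (v ⬝ᵥ y) 0 ^ 2 ∂μ :=
    fun v => integral_nonneg fun y => sq_nonneg _
  have hNsq : ∀ v, (NN v) ^ 2 = ∫ y, max (v ⬝ᵥ y) 0 ^ 2 ∂μ :=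
    fun v => Real.sq_sqrt (hIrelu v)
  have hβ0 : 0 < β := hβ.1
  have hbetaQ : ∀ v, β * (v ⬝ᵥ C.mulVec v) ≤ (NN v) ^ 2 := by
    intro v
    rw [hNsq, hQint]
    by_cases hv : v = 0
    · subst hv; simp
    · exact hret v hv
  have hQle : ∀ v, NN v ≤ 1 → v ⬝ᵥ C.mulVec v ≤ β⁻¹ := by
    intro v hv
    have h1 : (NN v) ^ 2 ≤ 1 := by nlinarith [hNnonneg v]
    rw [← one_div, le_div_iff₀ hβ0]
    nlinarith [hbetaQ v]
  have hQz : ∀ v : Fin d0 → ℝ, v ⬝ᵥ C.mulVec v = 0 → ∀ i, v ⬝ᵥ x i = 0 := by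
    intro v hv i
    have hcs := cs_ineq hint v (z i)
    rw [hv, zero_mul] at hcs
    have : v ⬝ᵥ C.mulVec (z i) = 0 := by
      have := sq_nonneg (v ⬝ᵥ C.mulVec (z i))
      nlinarith
    rw [← hz i]
    exact this
  have hNzero : ∀ v, NN v = 0 → ∀ i, v ⬝ᵥ x i = 0 := by
    intro v hv i
    refine hQz v ?_ i
    have h1 := hbetaQ v
    rw [hv] at h1
    have h2 := hQnonneg v
    nlinarith
  have hNsmul : ∀ c : ℝ, 0 ≤ c → ∀ v, NN (c • v) = c * NN v := by
    intro c hc v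
    have hptw : ∀ y : Fin d0 → ℝ, max ((c • v) ⬝ᵥ y) 0 ^ 2 = c ^ 2 * (max (v ⬝ᵥ y) 0 ^ 2) := by
      intro y
      rw [smul_dotProduct, smul_eq_mul,
        show max (c * (v ⬝ᵥ y)) 0 = c * max (v ⬝ᵥ y) 0 by
          rw [mul_max_of_nonneg _ _ hc, mul_zero]]
      ring
    show Real.sqrt (∫ y, max ((c • v) ⬝ᵥ y) 0 ^ 2 ∂μ) = c * Real.sqrt _
    rw [integral_congr_ae (Filter.Eventually.of_forall hptw), integral_const_mul,
      Real.sqrt_mul (sq_nonneg c), Real.sqrt_sq hc]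
  -- the normalized class domain
  have hN0 : NN 0 ≤ 1 := by
    have : NN 0 = 0 := by
      show Real.sqrt (∫ y, max ((0 : Fin d0 → ℝ) ⬝ᵥ y) 0 ^ 2 ∂μ) = 0
      simp [zero_dotProduct]
    rw [this]; exact zero_le_one
  let D := {v : Fin d0 → ℝ // NN v ≤ 1}
  haveI : Nonempty D := ⟨⟨0, hN0⟩⟩
  set t : Fin n → D → ℝ := fun j v => (v : Fin d0 → ℝ) ⬝ᵥ x j with ht
  set c : Fin n → ℝ := fun j => Real.sqrt (z j ⬝ᵥ C.mulVec (z j)) / Real.sqrt β with hc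
  have hsqβ : 0 < Real.sqrt β := Real.sqrt_pos.mpr hβ0
  have hb : ∀ j v, |t j v| ≤ c j := by
    rintro j ⟨v, hv⟩
    show |v ⬝ᵥ x j| ≤ c j
    rw [← hz j]
    have h1 := cs_ineq hint v (z j)
    have h2 := hQle v hv
    calc |v ⬝ᵥ C.mulVec (z j)| = Real.sqrt ((v ⬝ᵥ C.mulVec (z j)) ^ 2) :=
          (Real.sqrt_sq_eq_abs _).symm
      _ ≤ Real.sqrt (β⁻¹ * (z j ⬝ᵥ C.mulVec (z j))) := Real.sqrt_le_sqrt
          (h1.trans (mul_le_mul_of_nonneg_right h2 (hQnonneg _)))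
      _ = c j := by
          rw [Real.sqrt_mul (inv_nonneg.mpr hβ0.le), Real.sqrt_inv, hc]
          ring
  have hrelu_abs : ∀ (j : Fin n) (v : D), |max (t j v) 0| ≤ |t j v| := by
    intro j v
    rw [abs_of_nonneg (le_max_right _ _)]
    exact max_le (le_abs_self _) (abs_nonneg _)
  have hbddr : ∀ s : Fin n → Bool,
      BddAbove (Set.range fun v : D => ∑ j, sgn (s j) * max (t j v) 0) :=
    fun s => bdd_range t c hb (fun j v => max (t j v) 0) hrelu_abs s
  have hbddl : ∀ s : Fin n → Bool,
      BddAbove (Set.range fun v : D => ∑ j, sgn (s j) * t j v) :=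
    fun s => bdd_range t c hb t (fun j v => le_rfl) s
  set hh : (Fin n → Bool) → ℝ := fun s => ⨆ v : D, ∑ j, sgn (s j) * max (t j v) 0 with hhh
  set ll : (Fin n → Bool) → ℝ := fun s => ⨆ v : D, ∑ j, sgn (s j) * t j v with hll
  have hv0 : ∀ (s : Fin n → Bool), ∑ j, sgn (s j) * max (t j (⟨0, hN0⟩ : D)) 0 = 0 := by
    intro s
    refine Finset.sum_eq_zero fun j _ => ?_
    show sgn (s j) * max ((0 : Fin d0 → ℝ) ⬝ᵥ x j) 0 = 0
    simp [zero_dotProduct]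
  have hh0 : ∀ s, 0 ≤ hh s := by
    intro s
    rw [← hv0 s]
    exact le_ciSup (hbddr s) (⟨0, hN0⟩ : D)
  -- per-network bound on the supremum for each sign pattern
  have claimg : ∀ (s : Fin n → Bool) (v : Fin d0 → ℝ),
      |∑ i, sgn (s i) * max (v ⬝ᵥ x i) 0| ≤ NN v * (hh s + hh (fun i => ! s i)) := by
    intro s v
    by_cases hNv : NN v = 0
    · have : ∀ i : Fin n, max (v ⬝ᵥ x i) 0 = 0 := by
        intro i
        rw [hNzero v hNv i]
        exact max_self 0
      simp [this, hNv]
    · have hNpos : 0 < NN v := lt_of_le_of_ne (hNnonneg v) (Ne.symm hNv)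
      have hwmem : NN ((NN v)⁻¹ • v) ≤ 1 := by
        rw [hNsmul _ (inv_nonneg.mpr hNpos.le) v, inv_mul_cancel₀ hNv]
      set w : D := ⟨(NN v)⁻¹ • v, hwmem⟩ with hw
      have hwv : ∀ i, max (t i w) 0 = (NN v)⁻¹ * max (v ⬝ᵥ x i) 0 := by
        intro i
        show max (((NN v)⁻¹ • v) ⬝ᵥ x i) 0 = _
        rw [smul_dotProduct, smul_eq_mul,
          mul_max_of_nonneg _ _ (inv_nonneg.mpr hNpos.le), mul_zero]
      set gv := ∑ i, sgn (s i) * max (v ⬝ᵥ x i) 0 with hgv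
      have hg1 : ∑ i, sgn (s i) * max (t i w) 0 = (NN v)⁻¹ * gv := by
        rw [hgv, Finset.mul_sum]
        exact Finset.sum_congr rfl fun i _ => by rw [hwv i]; ring
      have hg2 : ∑ i, sgn ((fun i => ! s i) i) * max (t i w) 0 = -((NN v)⁻¹ * gv) := by
        rw [← hg1, ← Finset.sum_neg_distrib]
        exact Finset.sum_congr rfl fun i _ => by rw [sgn_neg']; ring
      have h1 : (NN v)⁻¹ * gv ≤ hh s := by
        rw [← hg1]
        exact le_ciSup (hbddr s) w
      have h2 : -((NN v)⁻¹ * gv) ≤ hh (fun i => ! s i) := by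
        rw [← hg2]
        exact le_ciSup (hbddr _) w
      have e1 : gv ≤ NN v * hh s := by
        have := mul_le_mul_of_nonneg_left h1 hNpos.le
        rwa [← mul_assoc, mul_inv_cancel₀ hNv, one_mul] at this
      have e2 : -gv ≤ NN v * hh (fun i => ! s i) := by
        have := mul_le_mul_of_nonneg_left h2 hNpos.le
        rwa [mul_neg, ← mul_assoc, mul_inv_cancel₀ hNv, one_mul] at this
      rw [abs_le]
      constructor
      · nlinarith [hh0 s, mul_nonneg hNpos.le (hh0 s)]
      · nlinarith [hh0 (fun i => ! s i), mul_nonneg hNpos.le (hh0 (fun i => ! s i))]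
  have main1 : ∀ s : Fin n → Bool,
      sSup ((fun f : (Fin d0 → ℝ) → ℝ =>
          (n : ℝ)⁻¹ * ∑ i, (if s i then (1 : ℝ) else -1) * f (x i)) '' Falpha d1 μ α)
        ≤ (n : ℝ)⁻¹ * (α * (hh s + hh (fun i => ! s i))) := by
    intro s
    have hRHS : 0 ≤ (n : ℝ)⁻¹ * (α * (hh s + hh (fun i => ! s i))) :=
      mul_nonneg (inv_nonneg.mpr (Nat.cast_nonneg n))
        (mul_nonneg hα.le (add_nonneg (hh0 s) (hh0 _)))
    refine Real.sSup_le ?_ hRHS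
    rintro y ⟨f, ⟨u, Vm, rfl, hcon⟩, rfl⟩
    simp only
    have hswap : ∑ i, (if s i then (1 : ℝ) else -1) * (∑ p, u p * max (Vm p ⬝ᵥ x i) 0)
        = ∑ p, u p * ∑ i, sgn (s i) * max (Vm p ⬝ᵥ x i) 0 := by
      simp_rw [Finset.mul_sum]
      rw [Finset.sum_comm]
      refine Finset.sum_congr rfl fun p _ => Finset.sum_congr rfl fun i _ => by
        simp only [sgn]; ring
    rw [hswap]
    refine mul_le_mul_of_nonneg_left ?_ (inv_nonneg.mpr (Nat.cast_nonneg n))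
    have hcon' : ∑ p, |u p| * NN (Vm p) ≤ α := hcon
    calc ∑ p, u p * ∑ i, sgn (s i) * max (Vm p ⬝ᵥ x i) 0
        ≤ ∑ p, |u p| * (NN (Vm p) * (hh s + hh (fun i => ! s i))) := by
          refine Finset.sum_le_sum fun p _ => ?_
          calc u p * ∑ i, sgn (s i) * max (Vm p ⬝ᵥ x i) 0
              ≤ |u p * ∑ i, sgn (s i) * max (Vm p ⬝ᵥ x i) 0| := le_abs_self _
            _ = |u p| * |∑ i, sgn (s i) * max (Vm p ⬝ᵥ x i) 0| := abs_mul _ _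
            _ ≤ |u p| * (NN (Vm p) * (hh s + hh (fun i => ! s i))) :=
                mul_le_mul_of_nonneg_left (claimg s (Vm p)) (abs_nonneg _)
      _ = (∑ p, |u p| * NN (Vm p)) * (hh s + hh (fun i => ! s i)) := by
          rw [Finset.sum_mul]
          exact Finset.sum_congr rfl fun p _ => (mul_assoc _ _ _).symm
      _ ≤ α * (hh s + hh (fun i => ! s i)) :=
          mul_le_mul_of_nonneg_right hcon' (add_nonneg (hh0 s) (hh0 _))
  -- relate `pinv` quadratic form to `z`
  have hpb : ∀ j, x j ⬝ᵥ (pinv C).mulVec (x j) = z j ⬝ᵥ C.mulVec (z j) := by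
    intro j
    rw [← hz j, Matrix.mulVec_mulVec, Matrix.dotProduct_mulVec,
      show C *ᵥ z j = z j ᵥ* Cᵀ from (Matrix.vecMul_transpose C (z j)).symm,
      Matrix.vecMul_vecMul, hCsymm, ← Matrix.mul_assoc, hpinv,
      ← Matrix.dotProduct_mulVec, ← Matrix.mulVec_transpose, hCsymm]
  -- linear sup bound
  set W : (Fin n → Bool) → (Fin d0 → ℝ) := fun s => ∑ j, sgn (s j) • z j with hW
  set QW : (Fin n → Bool) → ℝ := fun s => W s ⬝ᵥ C.mulVec (W s) with hQW
  have hQWnonneg : ∀ s, 0 ≤ QW s := fun s => hQnonneg _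
  have hWx : ∀ (s : Fin n → Bool) (v : Fin d0 → ℝ),
      ∑ j, sgn (s j) * (v ⬝ᵥ x j) = v ⬝ᵥ C.mulVec (W s) := by
    intro s v
    rw [hW, mulVec_sum_smul, dot_sum_smul]
    exact Finset.sum_congr rfl fun j _ => by rw [hz j]
  have hle : ∀ s, ll s ≤ (Real.sqrt β)⁻¹ * Real.sqrt (QW s) := by
    intro s
    refine ciSup_le fun v => ?_
    show ∑ j, sgn (s j) * ((v : Fin d0 → ℝ) ⬝ᵥ x j) ≤ _
    rw [hWx s v]
    calc (v : Fin d0 → ℝ) ⬝ᵥ C.mulVec (W s)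
        ≤ |(v : Fin d0 → ℝ) ⬝ᵥ C.mulVec (W s)| := le_abs_self _
      _ = Real.sqrt (((v : Fin d0 → ℝ) ⬝ᵥ C.mulVec (W s)) ^ 2) :=
          (Real.sqrt_sq_eq_abs _).symm
      _ ≤ Real.sqrt (β⁻¹ * QW s) := Real.sqrt_le_sqrt
          ((cs_ineq hint _ _).trans
            (mul_le_mul_of_nonneg_right (hQle _ v.2) (hQWnonneg s)))
      _ = (Real.sqrt β)⁻¹ * Real.sqrt (QW s) := by
          rw [Real.sqrt_mul (inv_nonneg.mpr hβ0.le), Real.sqrt_inv]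
  -- orthogonality of signs
  have horth : ∀ j k : Fin n, (∑ s : Fin n → Bool, sgn (s j) * sgn (s k))
      = if j = k then (2 ^ n : ℝ) else 0 := by
    intro j k
    by_cases h : j = k
    · subst h
      rw [if_pos rfl]
      simp only [sgn_mul_self]
      rw [Finset.sum_const, Finset.card_univ, nsmul_eq_mul, mul_one, ← card_signs n]
    · rw [if_neg h]
      exact sgn_orth j k h
  have hQWsum : ∑ s : Fin n → Bool, QW s
      = (2 ^ n : ℝ) * ∑ j, z j ⬝ᵥ C.mulVec (z j) := by
    have hexp : ∀ s : Fin n → Bool, QW s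
        = ∑ j, ∑ k, sgn (s j) * sgn (s k) * (z j ⬝ᵥ C.mulVec (z k)) := by
      intro s
      rw [hQW]
      show W s ⬝ᵥ C.mulVec (W s) = _
      rw [hW, mulVec_sum_smul, sum_smul_dot]
      refine Finset.sum_congr rfl fun j _ => ?_
      rw [dot_sum_smul, Finset.mul_sum]
      exact Finset.sum_congr rfl fun k _ => by ring
    simp only [hexp]
    rw [Finset.sum_comm]
    have : ∀ j : Fin n, ∑ s : Fin n → Bool, ∑ k, sgn (s j) * sgn (s k) * (z j ⬝ᵥ C.mulVec (z k))
        = (2 ^ n : ℝ) * (z j ⬝ᵥ C.mulVec (z j)) := by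
      intro j
      rw [Finset.sum_comm]
      have hk : ∀ k : Fin n, ∑ s : Fin n → Bool, sgn (s j) * sgn (s k) * (z j ⬝ᵥ C.mulVec (z k))
          = (if j = k then (2 ^ n : ℝ) else 0) * (z j ⬝ᵥ C.mulVec (z k)) := by
        intro k
        rw [← horth j k, Finset.sum_mul]
      simp only [hk]
      rw [Finset.sum_eq_single j]
      · rw [if_pos rfl]
      · intro k _ hkj
        rw [if_neg (Ne.symm hkj), zero_mul]
      · intro hj
        exact absurd (Finset.mem_univ j) hj
    simp only [this]
    rw [← Finset.mul_sum]
  -- Cauchy–Schwarz over sign patterns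
  have hsqrtsum : ∑ s : Fin n → Bool, Real.sqrt (QW s)
      ≤ Real.sqrt ((2 ^ n : ℝ) * ∑ s : Fin n → Bool, QW s) := by
    have h1 := Finset.sum_mul_sq_le_sq_mul_sq Finset.univ (fun _ : Fin n → Bool => (1 : ℝ))
      (fun s => Real.sqrt (QW s))
    simp only [one_mul, one_pow] at h1
    rw [Finset.sum_const, Finset.card_univ, nsmul_eq_mul, mul_one] at h1
    have h2 : ∀ s : Fin n → Bool, Real.sqrt (QW s) ^ 2 = QW s :=
      fun s => Real.sq_sqrt (hQWnonneg s)
    simp only [h2] at h1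
    rw [card_signs n] at h1
    calc ∑ s : Fin n → Bool, Real.sqrt (QW s)
        = Real.sqrt ((∑ s : Fin n → Bool, Real.sqrt (QW s)) ^ 2) :=
          (Real.sqrt_sq (Finset.sum_nonneg fun s _ => Real.sqrt_nonneg _)).symm
      _ ≤ Real.sqrt ((2 ^ n : ℝ) * ∑ s : Fin n → Bool, QW s) := Real.sqrt_le_sqrt h1
  -- final assembly
  set T : ℝ := ∑ j, x j ⬝ᵥ (pinv C).mulVec (x j) with hT
  have hTz : (∑ j, z j ⬝ᵥ C.mulVec (z j)) = T := by
    rw [hT]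
    exact Finset.sum_congr rfl fun j _ => (hpb j).symm
  have hTnonneg : 0 ≤ T := by
    rw [← hTz]
    exact Finset.sum_nonneg fun j _ => hQnonneg _
  have hsqrt2 : Real.sqrt ((2 ^ n : ℝ) * ((2 ^ n : ℝ) * T)) = (2 ^ n : ℝ) * Real.sqrt T := by
    rw [← mul_assoc, show (2 ^ n : ℝ) * (2 ^ n : ℝ) = ((2 ^ n : ℝ)) ^ 2 by ring,
      Real.sqrt_mul (sq_nonneg _), Real.sqrt_sq (by positivity)]
  have e1 : ∑ s : Fin n → Bool, hh s ≤ ∑ s : Fin n → Bool, ll s := contraction t c hb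
  have e2 : ∑ s : Fin n → Bool, ll s ≤ (Real.sqrt β)⁻¹ * ((2 ^ n : ℝ) * Real.sqrt T) := by
    calc ∑ s : Fin n → Bool, ll s ≤ ∑ s : Fin n → Bool, (Real.sqrt β)⁻¹ * Real.sqrt (QW s) :=
          Finset.sum_le_sum fun s _ => hle s
      _ = (Real.sqrt β)⁻¹ * ∑ s : Fin n → Bool, Real.sqrt (QW s) := by rw [Finset.mul_sum]
      _ ≤ (Real.sqrt β)⁻¹ * Real.sqrt ((2 ^ n : ℝ) * ∑ s : Fin n → Bool, QW s) :=
          mul_le_mul_of_nonneg_left hsqrtsum (inv_nonneg.mpr hsqβ.le)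
      _ = (Real.sqrt β)⁻¹ * ((2 ^ n : ℝ) * Real.sqrt T) := by
          rw [hQWsum, hTz, hsqrt2]
  have hmain : radS (Falpha d1 μ α) x
      ≤ ((2 : ℝ) ^ n)⁻¹ * ((n : ℝ)⁻¹ * α * (2 * ∑ s : Fin n → Bool, hh s)) := by
    rw [radS]
    refine mul_le_mul_of_nonneg_left ?_ (by positivity)
    calc ∑ s : Fin n → Bool, sSup ((fun f : (Fin d0 → ℝ) → ℝ =>
            (n : ℝ)⁻¹ * ∑ i, (if s i then (1 : ℝ) else -1) * f (x i)) '' Falpha d1 μ α)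
        ≤ ∑ s : Fin n → Bool, (n : ℝ)⁻¹ * (α * (hh s + hh (fun i => ! s i))) :=
          Finset.sum_le_sum fun s _ => main1 s
      _ = (n : ℝ)⁻¹ * α * (2 * ∑ s : Fin n → Bool, hh s) := by
          rw [← Finset.mul_sum, ← Finset.mul_sum, Finset.sum_add_distrib,
            sum_neg hh]
          ring
  have hchain : radS (Falpha d1 μ α) x
      ≤ ((2 : ℝ) ^ n)⁻¹ * ((n : ℝ)⁻¹ * α * (2 * ((Real.sqrt β)⁻¹ * ((2 ^ n : ℝ) * Real.sqrt T)))) := by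
    refine hmain.trans ?_
    have h12 := e1.trans e2
    refine mul_le_mul_of_nonneg_left (mul_le_mul_of_nonneg_left
      (mul_le_mul_of_nonneg_left h12 (by norm_num)) (by positivity)) (by positivity)
  refine hchain.trans (le_of_eq ?_)
  have h2n : ((2 : ℝ) ^ n) ≠ 0 := by positivity
  rw [div_eq_mul_inv, mul_inv]
  calc ((2 : ℝ) ^ n)⁻¹ * ((n : ℝ)⁻¹ * α * (2 * ((Real.sqrt β)⁻¹ * ((2 ^ n : ℝ) * Real.sqrt T))))
      = ((2 : ℝ) ^ n)⁻¹ * (2 ^ n : ℝ) * (2 * α * Real.sqrt T * ((n : ℝ)⁻¹ * (Real.sqrt β)⁻¹)) := by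
        ring
    _ = 2 * α * Real.sqrt T * ((n : ℝ)⁻¹ * (Real.sqrt β)⁻¹) := by
        rw [inv_mul_cancel₀ h2n, one_mul]
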